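/- Let A = (Σ, q, N, δ) be a simple LQCA with |N| = r ≥ 2, and define the product graph H_A with vertex set Σ^{r−1} × Σ^{r−1} and an edge from (x₁z₁, x₂z₂) to (z₁y₁, z₂y₂) whenever ⟨δ(x₁z₁y₁), δ(x₂z₂y₂)⟩ ≠ 0. Then the columns of U_A are pairwise orthogonal (⟨U_A(·,c), U_A(·,c')⟩ = 0 for all distinct configurations c ≠ c') if and only if every cycle in H_A starting and ending at (q^{r−1}, q^{r−1}) has equal first and second coordinate projections (i.e., passes only through diagonal vertices in the sense that the two projected paths in G_A coincide). -/

import Mathlib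

open Finset in
private lemma lqca_key_sum {S : Type*} [Fintype S] [DecidableEq S]
    (q : S) (m : ℕ) (δ : (Fin (m + 2) → S) → EuclideanSpace ℂ S)
    (hq : ∀ x, δ (fun _ => q) x = if x = q then 1 else 0)
    (c c' : ℤ → S) (I : Finset ℤ)
    (hIc : ∀ i : ℤ, i ∉ I → (fun a : Fin (m+2) => c (i + (a:ℤ))) = fun _ => q)
    (hIc' : ∀ i : ℤ, i ∉ I → (fun a : Fin (m+2) => c' (i + (a:ℤ))) = fun _ => q) :
    (∑' d : {c : ℤ → S // {i | c i ≠ q}.Finite},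
        (starRingEnd ℂ) (∏ᶠ i : ℤ, δ (fun a => c (i + (a : ℤ))) (d.1 i)) *
          ∏ᶠ i : ℤ, δ (fun a => c' (i + (a : ℤ))) (d.1 i))
      = ∏ i ∈ I, inner (𝕜 := ℂ) (δ (fun a : Fin (m+2) => c (i + (a:ℤ))))
          (δ (fun a : Fin (m+2) => c' (i + (a:ℤ)))) := by
  classical
  set Conf := {c : ℤ → S // {i | c i ≠ q}.Finite} with hConf
  set e : ({x // x ∈ I} → S) → Conf := fun g =>
    ⟨fun j => if h : j ∈ I then g ⟨j, h⟩ else q, by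
      apply I.finite_toSet.subset
      intro j hj
      simp only [Set.mem_setOf_eq] at hj
      simp only [Finset.mem_coe] at *
      by_contra h
      exact hj (by simp [h])⟩ with he
  -- if d is supported in I, the finprods are products over I
  have hA : ∀ (b : ℤ → S) (f : ℤ → S) (hf : ∀ i : ℤ, i ∉ I → (fun a : Fin (m+2) => f (i + (a:ℤ))) = fun _ => q),
      (∀ i ∉ I, b i = q) →
      (∏ᶠ i : ℤ, δ (fun a => f (i + (a : ℤ))) (b i)) = ∏ i ∈ I, δ (fun a => f (i + (a : ℤ))) (b i) := by
    intro b f hf hb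
    apply finprod_eq_prod_of_mulSupport_subset
    intro i hi
    by_contra hiI
    apply hi
    show δ (fun a => f (i + (a:ℤ))) (b i) = 1
    rw [hf i hiI, hb i hiI, hq q, if_pos rfl]
  -- if d is not supported in I, the summand is 0
  have hB : ∀ d : Conf, (¬ ∀ i ∉ I, d.1 i = q) →
      (starRingEnd ℂ) (∏ᶠ i : ℤ, δ (fun a => c (i + (a : ℤ))) (d.1 i)) *
          (∏ᶠ i : ℤ, δ (fun a => c' (i + (a : ℤ))) (d.1 i)) = 0 := by
    intro d hd
    push_neg at hd
    obtain ⟨i₀, hi₀I, hi₀⟩ := hd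
    have : (∏ᶠ i : ℤ, δ (fun a => c (i + (a : ℤ))) (d.1 i)) = 0 := by
      have hT : (∏ᶠ i : ℤ, δ (fun a => c (i + (a : ℤ))) (d.1 i))
          = ∏ i ∈ I ∪ d.2.toFinset, δ (fun a => c (i + (a : ℤ))) (d.1 i) := by
        apply finprod_eq_prod_of_mulSupport_subset
        intro i hi
        by_contra hiT
        simp only [Finset.coe_union, Set.mem_union, Finset.mem_coe, Set.Finite.mem_toFinset,
          Set.mem_setOf_eq, not_or, not_not] at hiT
        apply hi
        show δ (fun a => c (i + (a:ℤ))) (d.1 i) = 1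
        rw [hIc i hiT.1, hiT.2, hq q, if_pos rfl]
      rw [hT]
      apply Finset.prod_eq_zero (i := i₀)
      · simp [Set.Finite.mem_toFinset, hi₀]
      · rw [hIc i₀ hi₀I, hq (d.1 i₀), if_neg hi₀]
    rw [this, map_zero, zero_mul]
  rw [tsum_eq_sum (s := Finset.image e Finset.univ) ?h0]
  case h0 =>
    intro d hd
    apply hB
    intro hcontra
    apply hd
    rw [Finset.mem_image]
    refine ⟨fun i => d.1 i.1, Finset.mem_univ _, ?_⟩
    apply Subtype.ext
    funext j
    by_cases h : j ∈ I
    · simp [he, h]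
    · simp [he, h, hcontra j h]
  rw [Finset.sum_image (by
    intro g _ g' _ hgg'
    funext i
    have := congrArg (fun d : Conf => d.1 i.1) hgg'
    simpa [he, i.2] using this)]
  have heg : ∀ (g : ({x // x ∈ I} → S)) (i : ℤ), i ∉ I → (e g).1 i = q := by
    intro g i hi; simp [he, hi]
  have step1 : ∀ g : ({x // x ∈ I} → S),
      (starRingEnd ℂ) (∏ᶠ i : ℤ, δ (fun a => c (i + (a : ℤ))) ((e g).1 i)) *
          (∏ᶠ i : ℤ, δ (fun a => c' (i + (a : ℤ))) ((e g).1 i))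
        = ∏ i ∈ I.attach, ((starRingEnd ℂ) (δ (fun a => c ((i:ℤ) + (a : ℤ))) (g ⟨i.1, i.2⟩)) *
            δ (fun a => c' ((i:ℤ) + (a : ℤ))) (g ⟨i.1, i.2⟩)) := by
    intro g
    rw [hA _ c hIc (heg g), hA _ c' hIc' (heg g), map_prod, ← Finset.prod_mul_distrib,
      ← Finset.prod_attach I (f := fun i => (starRingEnd ℂ) (δ (fun a => c (i + (a:ℤ))) ((e g).1 i)) *
            δ (fun a => c' (i + (a : ℤ))) ((e g).1 i))]
    apply Finset.prod_congr rfl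
    intro i _
    have : (e g).1 i.1 = g ⟨i.1, i.2⟩ := by simp [he, i.2]
    rw [this]
  rw [Finset.sum_congr rfl (fun g _ => step1 g)]
  -- now swap sum and product
  have hswap := Fintype.prod_sum (ι := {x // x ∈ I}) (κ := fun _ => S)
    (f := fun i s => (starRingEnd ℂ) (δ (fun a => c ((i:ℤ) + (a : ℤ))) s) *
      δ (fun a => c' ((i:ℤ) + (a : ℤ))) s)
  have hattach : I.attach = (Finset.univ : Finset {x // x ∈ I}) := by
    ext x; simp
  have hinner : ∀ i : ℤ, (inner (𝕜 := ℂ) (δ (fun a : Fin (m+2) => c (i + (a:ℤ))))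
      (δ (fun a : Fin (m+2) => c' (i + (a:ℤ)))) : ℂ)
      = ∑ s : S, (starRingEnd ℂ) (δ (fun a : Fin (m+2) => c (i + (a:ℤ))) s) *
          δ (fun a : Fin (m+2) => c' (i + (a:ℤ))) s := by
    intro i
    simp [PiLp.inner_apply, RCLike.inner_apply]
    exact Finset.sum_congr rfl (fun _ _ => mul_comm _ _)
  rw [← Finset.prod_coe_sort I, Finset.prod_congr rfl (fun (i : {x // x ∈ I}) _ => hinner i.1),
    hswap]
  apply Finset.sum_congr rfl
  intro g _
  rw [hattach]

private lemma lqca_chain {S : Type*} {k m : ℕ} (f : Fin (k+1) → Fin (m+1) → S)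
    (hov : ∀ (i : Fin k) (a : Fin m), f i.castSucc a.succ = f i.succ a.castSucc)
    (s s' : Fin (k+1)) (a a' : Fin (m+1)) (h : (s:ℕ) + (a:ℕ) = (s':ℕ) + (a':ℕ)) :
    f s a = f s' a' := by
  have hcongr : ∀ (x y : Fin (k+1)) (u v : Fin (m+1)), (x:ℕ) = (y:ℕ) → (u:ℕ) = (v:ℕ) →
      f x u = f y v := by
    intro x y u v hxy huv
    obtain rfl : x = y := Fin.ext hxy
    obtain rfl : u = v := Fin.ext huv
    rfl
  have aux : ∀ (d u b : ℕ) (hu : u + d ≤ k) (hb : d + b ≤ m),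
      f ⟨u, by omega⟩ ⟨d + b, by omega⟩ = f ⟨u + d, by omega⟩ ⟨b, by omega⟩ := by
    intro d
    induction d with
    | zero => intro u b hu hb; exact hcongr _ _ _ _ (by simp) (by simp)
    | succ n ih =>
      intro u b hu hb
      have h1 : f ⟨u, by omega⟩ ⟨n + b + 1, by omega⟩ = f ⟨u + 1, by omega⟩ ⟨n + b, by omega⟩ :=
        hov ⟨u, by omega⟩ ⟨n + b, by omega⟩
      calc f ⟨u, by omega⟩ ⟨n + 1 + b, by omega⟩
          = f ⟨u, by omega⟩ ⟨n + b + 1, by omega⟩ := hcongr _ _ _ _ rfl (by simp only [Fin.val_mk]; omega)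
        _ = f ⟨u + 1, by omega⟩ ⟨n + b, by omega⟩ := h1
        _ = f ⟨u + 1 + n, by omega⟩ ⟨b, by omega⟩ := ih (u+1) b (by omega) (by omega)
        _ = f ⟨u + (n+1), by omega⟩ ⟨b, by omega⟩ := hcongr _ _ _ _ (by simp only [Fin.val_mk]; omega) rfl
  have main : ∀ (s s' : Fin (k+1)) (a a' : Fin (m+1)), (s:ℕ) ≤ (s':ℕ) →
      (s:ℕ) + (a:ℕ) = (s':ℕ) + (a':ℕ) → f s a = f s' a' := by
    intro s s' a a' hle h
    calc f s a = f ⟨s, by omega⟩ ⟨((s':ℕ) - s) + a', by omega⟩ := hcongr _ _ _ _ rfl (by simp only [Fin.val_mk]; omega)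
      _ = f ⟨(s:ℕ) + ((s':ℕ) - s), by omega⟩ ⟨a', by omega⟩ := aux _ _ _ (by omega) (by omega)
      _ = f s' a' := hcongr _ _ _ _ (by simp only [Fin.val_mk]; omega) rfl
  rcases le_total (s:ℕ) (s':ℕ) with hle | hle
  · exact main s s' a a' hle h
  · exact (main s' s a' a hle h.symm).symm

private def lqcaCfg {S : Type*} (q : S) (k m : ℕ) (f : Fin (k+1) → Fin (m+1) → S) (j : ℤ) : S :=
  if h : 0 ≤ j ∧ j ≤ (k:ℤ) then f ⟨j.toNat, by omega⟩ 0 else q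

private lemma lqcaCfg_finite {S : Type*} (q : S) (k m : ℕ) (f : Fin (k+1) → Fin (m+1) → S) :
    {j : ℤ | lqcaCfg q k m f j ≠ q}.Finite := by
  apply (Set.finite_Icc (0:ℤ) (k:ℤ)).subset
  intro j hj
  simp only [Set.mem_setOf_eq, lqcaCfg] at hj
  rw [Set.mem_Icc]
  by_contra h
  exact hj (dif_neg (by omega))

private lemma lqcaCfg_spec {S : Type*} (q : S) (k m : ℕ) (f : Fin (k+1) → Fin (m+1) → S)
    (hov : ∀ (i : Fin k) (a : Fin m), f i.castSucc a.succ = f i.succ a.castSucc)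
    (hl : f (Fin.last k) = fun _ => q)
    (s : Fin (k+1)) (t : Fin (m+1)) :
    lqcaCfg q k m f (((s:ℕ):ℤ) + ((t:ℕ):ℤ)) = f s t := by
  have hs := s.isLt
  have ht := t.isLt
  by_cases hj : 0 ≤ ((s:ℕ):ℤ) + ((t:ℕ):ℤ) ∧ ((s:ℕ):ℤ) + ((t:ℕ):ℤ) ≤ (k:ℤ)
  · rw [lqcaCfg, dif_pos hj]
    exact lqca_chain f hov _ s _ t (by simp only [Fin.val_mk, Fin.val_zero]; omega)
  · rw [lqcaCfg, dif_neg hj]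
    have h1 : f s t = f (Fin.last k) ⟨(s:ℕ) + (t:ℕ) - k, by omega⟩ :=
      lqca_chain f hov s (Fin.last k) t _ (by simp only [Fin.val_mk, Fin.val_last]; omega)
    rw [h1, hl]

private lemma lqcaCfg_outside {S : Type*} (q : S) (k m : ℕ) (f : Fin (k+1) → Fin (m+1) → S)
    (hov : ∀ (i : Fin k) (a : Fin m), f i.castSucc a.succ = f i.succ a.castSucc)
    (h0 : f 0 = fun _ => q) (hl : f (Fin.last k) = fun _ => q)
    (i : ℤ) (hi : i < 0 ∨ (k:ℤ) ≤ i) (a : Fin (m+2)) :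
    lqcaCfg q k m f (i + ((a:ℕ):ℤ)) = q := by
  have ha := a.isLt
  by_cases hj : 0 ≤ i + ((a:ℕ):ℤ) ∧ i + ((a:ℕ):ℤ) ≤ (k:ℤ)
  · rw [lqcaCfg, dif_pos hj]
    rcases hi with hi | hi
    · -- j ≤ m, go to f 0
      have h1 : f ⟨(i + ((a:ℕ):ℤ)).toNat, by omega⟩ (0 : Fin (m+1))
          = f (0 : Fin (k+1)) ⟨(i + ((a:ℕ):ℤ)).toNat, by omega⟩ :=
        lqca_chain f hov _ _ _ _ (by simp only [Fin.val_mk, Fin.val_zero]; omega)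
      rw [h1, h0]
    · -- j = k, go to f last
      have h1 : f ⟨(i + ((a:ℕ):ℤ)).toNat, by omega⟩ (0 : Fin (m+1))
          = f (Fin.last k) (0 : Fin (m+1)) :=
        lqca_chain f hov _ _ _ _ (by simp only [Fin.val_mk, Fin.val_last]; omega)
      rw [h1, hl]
  · rw [lqcaCfg, dif_neg hj]

private lemma lqcaCfg_window {S : Type*} (q : S) (k m : ℕ) (f : Fin (k+1) → Fin (m+1) → S)
    (hov : ∀ (i : Fin k) (a : Fin m), f i.castSucc a.succ = f i.succ a.castSucc)
    (hl : f (Fin.last k) = fun _ => q) (i : Fin k) :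
    (fun a : Fin (m+2) => lqcaCfg q k m f (((i:ℕ):ℤ) + ((a:ℕ):ℤ)))
      = Fin.snoc (f i.castSucc) (f i.succ (Fin.last m)) := by
  funext a
  induction a using Fin.lastCases with
  | last =>
    rw [Fin.snoc_last]
    have h1 : ((i:ℕ):ℤ) + ((Fin.last (m+1) : ℕ):ℤ)
        = (((i.succ : Fin (k+1)):ℕ):ℤ) + (((Fin.last m : Fin (m+1)):ℕ):ℤ) := by
      simp only [Fin.val_last, Fin.val_succ]; push_cast; ring
    rw [h1, lqcaCfg_spec q k m f hov hl i.succ (Fin.last m)]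
  | cast t =>
    rw [Fin.snoc_castSucc]
    have h1 : ((i:ℕ):ℤ) + (((t.castSucc : Fin (m+2)):ℕ):ℤ)
        = (((i.castSucc : Fin (k+1)):ℕ):ℤ) + ((t:ℕ):ℤ) := by
      simp only [Fin.coe_castSucc]
    rw [h1, lqcaCfg_spec q k m f hov hl i.castSucc t]

/-- Lemma 4: for a simple LQCA with neighborhood size `r = m + 2 ≥ 2`, the
columns of the time evolution operator are pairwise orthogonal iff every
`q`-cycle of the product graph `H_A` (vertices `Σ^{r-1} × Σ^{r-1}`, an edge
`(x₁z₁,x₂z₂) → (z₁y₁,z₂y₂)` whenever `⟨δ(x₁z₁y₁), δ(x₂z₂y₂)⟩ ≠ 0`) has equal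
first and second coordinate projections. -/
theorem orthogonal_columns_iff_diagonal_qcycles {S : Type*} [Fintype S] [DecidableEq S]
    (q : S) (m : ℕ) (δ : (Fin (m + 2) → S) → EuclideanSpace ℂ S)
    (hq : ∀ x, δ (fun _ => q) x = if x = q then 1 else 0)
    (hnz : ∀ w, δ w ≠ 0) :
    (∀ c c' : {c : ℤ → S // {i | c i ≠ q}.Finite}, c ≠ c' →
        (∑' d : {c : ℤ → S // {i | c i ≠ q}.Finite},
            (starRingEnd ℂ) (∏ᶠ i : ℤ, δ (fun a => c.1 (i + (a : ℤ))) (d.1 i)) *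
              ∏ᶠ i : ℤ, δ (fun a => c'.1 (i + (a : ℤ))) (d.1 i)) = 0)
      ↔ ∀ (k : ℕ) (p : Fin (k + 1) → ((Fin (m + 1) → S) × (Fin (m + 1) → S))),
          1 ≤ k →
          p 0 = (fun _ => q, fun _ => q) →
          p (Fin.last k) = (fun _ => q, fun _ => q) →
          (∀ i : Fin k,
            (∀ a : Fin m, (p i.castSucc).1 a.succ = (p i.succ).1 a.castSucc) ∧
            (∀ a : Fin m, (p i.castSucc).2 a.succ = (p i.succ).2 a.castSucc) ∧
            inner (𝕜 := ℂ)
              (δ (Fin.snoc (p i.castSucc).1 ((p i.succ).1 (Fin.last m))))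
              (δ (Fin.snoc (p i.castSucc).2 ((p i.succ).2 (Fin.last m)))) ≠ 0) →
          (fun s => (p s).1) = (fun s => (p s).2) := by
  classical
  have hone : (inner (𝕜 := ℂ) (δ (fun _ => q)) (δ (fun _ => q)) : ℂ) = 1 := by
    simp [PiLp.inner_apply, RCLike.inner_apply, hq, apply_ite]
    left; rw [EuclideanSpace.norm_eq]; simp [hq, apply_ite]
  constructor
  · -- orthogonality ⇒ diagonal q-cycles
    intro horth k p hk h0 hlast hedge
    have hov1 : ∀ (i : Fin k) (a : Fin m),
        (p i.castSucc).1 a.succ = (p i.succ).1 a.castSucc := fun i => (hedge i).1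
    have hov2 : ∀ (i : Fin k) (a : Fin m),
        (p i.castSucc).2 a.succ = (p i.succ).2 a.castSucc := fun i => (hedge i).2.1
    have hinner : ∀ i : Fin k, inner (𝕜 := ℂ)
        (δ (Fin.snoc (p i.castSucc).1 ((p i.succ).1 (Fin.last m))))
        (δ (Fin.snoc (p i.castSucc).2 ((p i.succ).2 (Fin.last m)))) ≠ 0 := fun i => (hedge i).2.2
    have h01 : (fun s => (p s).1) 0 = fun _ => q := by show (p 0).1 = _; rw [h0]
    have h02 : (fun s => (p s).2) 0 = fun _ => q := by show (p 0).2 = _; rw [h0]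
    have hl1 : (fun s => (p s).1) (Fin.last k) = fun _ => q := by show (p (Fin.last k)).1 = _; rw [hlast]
    have hl2 : (fun s => (p s).2) (Fin.last k) = fun _ => q := by show (p (Fin.last k)).2 = _; rw [hlast]
    set c1 := lqcaCfg q k m (fun s => (p s).1) with hc1
    set c2 := lqcaCfg q k m (fun s => (p s).2) with hc2
    have hc12 : c1 = c2 := by
      by_contra hcc
      set I : Finset ℤ := Finset.Icc (-(m:ℤ)-1) (k:ℤ) with hI
      have hIc : ∀ i : ℤ, i ∉ I → (fun a : Fin (m+2) => c1 (i + (a:ℤ))) = fun _ => q := by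
        intro i hi
        funext a
        apply lqcaCfg_outside q k m _ hov1 h01 hl1
        simp only [hI, Finset.mem_Icc, not_and_or, not_le] at hi
        omega
      have hIc' : ∀ i : ℤ, i ∉ I → (fun a : Fin (m+2) => c2 (i + (a:ℤ))) = fun _ => q := by
        intro i hi
        funext a
        apply lqcaCfg_outside q k m _ hov2 h02 hl2
        simp only [hI, Finset.mem_Icc, not_and_or, not_le] at hi
        omega
      have h0' : (∑' d : {c : ℤ → S // {i | c i ≠ q}.Finite},
            (starRingEnd ℂ) (∏ᶠ i : ℤ, δ (fun a => c1 (i + (a : ℤ))) (d.1 i)) *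
              ∏ᶠ i : ℤ, δ (fun a => c2 (i + (a : ℤ))) (d.1 i)) = 0 :=
        horth ⟨c1, lqcaCfg_finite q k m _⟩ ⟨c2, lqcaCfg_finite q k m _⟩
          (fun h => hcc (congrArg Subtype.val h))
      rw [lqca_key_sum q m δ hq c1 c2 I hIc hIc'] at h0'
      obtain ⟨i, hiI, hiz⟩ := Finset.prod_eq_zero_iff.mp h0'
      simp only [hI, Finset.mem_Icc] at hiI
      by_cases hir : 0 ≤ i ∧ i < (k:ℤ)
      · -- edge factor
        set i' : Fin k := ⟨i.toNat, by omega⟩ with hi'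
        have hival : ((i' : ℕ) : ℤ) = i := by simp [hi']; omega
        rw [← hival] at hiz
        rw [show (fun a : Fin (m+2) => c1 (((i':ℕ):ℤ) + (a:ℤ)))
              = Fin.snoc (p i'.castSucc).1 ((p i'.succ).1 (Fin.last m)) from
            lqcaCfg_window q k m _ hov1 hl1 i',
          show (fun a : Fin (m+2) => c2 (((i':ℕ):ℤ) + (a:ℤ)))
              = Fin.snoc (p i'.castSucc).2 ((p i'.succ).2 (Fin.last m)) from
            lqcaCfg_window q k m _ hov2 hl2 i'] at hiz
        exact hinner i' hiz
      · -- quiescent factor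
        have hw1 : (fun a : Fin (m+2) => c1 (i + (a:ℤ))) = fun _ => q := by
          funext a; exact lqcaCfg_outside q k m _ hov1 h01 hl1 i (by omega) a
        have hw2 : (fun a : Fin (m+2) => c2 (i + (a:ℤ))) = fun _ => q := by
          funext a; exact lqcaCfg_outside q k m _ hov2 h02 hl2 i (by omega) a
        rw [hw1, hw2, hone] at hiz
        exact one_ne_zero hiz
    funext s t
    calc (p s).1 t = c1 (((s:ℕ):ℤ) + ((t:ℕ):ℤ)) :=
          (lqcaCfg_spec q k m (fun s => (p s).1) hov1 hl1 s t).symm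
      _ = c2 (((s:ℕ):ℤ) + ((t:ℕ):ℤ)) := by rw [hc12]
      _ = (p s).2 t := lqcaCfg_spec q k m (fun s => (p s).2) hov2 hl2 s t
  · -- diagonal q-cycles ⇒ orthogonality
    intro hcyc c c' hne
    set F : Finset ℤ := insert (0:ℤ) (c.2.toFinset ∪ c'.2.toFinset) with hF
    have hF0 : (0:ℤ) ∈ F := Finset.mem_insert_self _ _
    set a := F.min' ⟨0, hF0⟩ with ha
    set b := F.max' ⟨0, hF0⟩ with hb
    have hab : a ≤ b := F.min'_le _ (F.max'_mem _)
    have hout : ∀ j : ℤ, j < a ∨ b < j → c.1 j = q ∧ c'.1 j = q := by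
      intro j hj
      have hjF : j ∉ F := by
        intro hjF
        rcases hj with hj | hj
        · exact absurd (F.min'_le j hjF) (by omega)
        · exact absurd (F.le_max' j hjF) (by omega)
      constructor
      · by_contra h
        exact hjF (by simp [hF, Set.Finite.mem_toFinset, h])
      · by_contra h
        exact hjF (by simp [hF, Set.Finite.mem_toFinset, h])
    set k : ℕ := (b - a).toNat + m + 2 with hk
    set L : ℤ := a - (m+1 : ℤ) with hL
    have hLk : L + (k:ℤ) = b + 1 := by omega
    set I : Finset ℤ := Finset.Icc L b with hI
    have hwc : ∀ i : ℤ, i ∉ I → (fun t : Fin (m+2) => c.1 (i + (t:ℤ))) = fun _ => q := by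
      intro i hi
      funext t
      have ht := t.isLt
      simp only [hI, Finset.mem_Icc, not_and_or, not_le] at hi
      rcases hi with hi | hi
      · exact (hout _ (Or.inl (by omega))).1
      · exact (hout _ (Or.inr (by omega))).1
    have hwc' : ∀ i : ℤ, i ∉ I → (fun t : Fin (m+2) => c'.1 (i + (t:ℤ))) = fun _ => q := by
      intro i hi
      funext t
      have ht := t.isLt
      simp only [hI, Finset.mem_Icc, not_and_or, not_le] at hi
      rcases hi with hi | hi
      · exact (hout _ (Or.inl (by omega))).2
      · exact (hout _ (Or.inr (by omega))).2
    rw [lqca_key_sum q m δ hq c.1 c'.1 I hwc hwc']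
    by_contra hprod
    have hfac : ∀ i : ℤ, i ∈ I → inner (𝕜 := ℂ)
        (δ (fun t : Fin (m+2) => c.1 (i + (t:ℤ))))
        (δ (fun t : Fin (m+2) => c'.1 (i + (t:ℤ)))) ≠ 0 := by
      intro i hi hz
      exact hprod (Finset.prod_eq_zero hi hz)
    set p : Fin (k+1) → ((Fin (m+1) → S) × (Fin (m+1) → S)) := fun s =>
      (fun t => c.1 (L + ((s:ℕ):ℤ) + ((t:ℕ):ℤ)),
       fun t => c'.1 (L + ((s:ℕ):ℤ) + ((t:ℕ):ℤ))) with hp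
    have h0v : ((0 : Fin (k+1)) : ℕ) = 0 := rfl
    have hlv : ((Fin.last k : Fin (k+1)) : ℕ) = k := rfl
    have h0p : p 0 = (fun _ => q, fun _ => q) := by
      refine Prod.ext ?_ ?_ <;> funext t <;> have ht := t.isLt
      · show c.1 (L + (((0 : Fin (k+1)):ℕ):ℤ) + ((t:ℕ):ℤ)) = q
        exact (hout _ (Or.inl (by omega))).1
      · show c'.1 (L + (((0 : Fin (k+1)):ℕ):ℤ) + ((t:ℕ):ℤ)) = q
        exact (hout _ (Or.inl (by omega))).2
    have hlp : p (Fin.last k) = (fun _ => q, fun _ => q) := by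
      refine Prod.ext ?_ ?_ <;> funext t <;> have ht := t.isLt
      · show c.1 (L + (((Fin.last k : Fin (k+1)):ℕ):ℤ) + ((t:ℕ):ℤ)) = q
        exact (hout _ (Or.inr (by omega))).1
      · show c'.1 (L + (((Fin.last k : Fin (k+1)):ℕ):ℤ) + ((t:ℕ):ℤ)) = q
        exact (hout _ (Or.inr (by omega))).2
    have hedges : ∀ i : Fin k,
        (∀ t : Fin m, (p i.castSucc).1 t.succ = (p i.succ).1 t.castSucc) ∧
        (∀ t : Fin m, (p i.castSucc).2 t.succ = (p i.succ).2 t.castSucc) ∧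
        inner (𝕜 := ℂ)
          (δ (Fin.snoc (p i.castSucc).1 ((p i.succ).1 (Fin.last m))))
          (δ (Fin.snoc (p i.castSucc).2 ((p i.succ).2 (Fin.last m)))) ≠ 0 := by
      intro i
      have hi := i.isLt
      refine ⟨?_, ?_, ?_⟩
      · intro t
        show c.1 (L + ((i.castSucc:ℕ):ℤ) + ((t.succ:ℕ):ℤ))
            = c.1 (L + ((i.succ:ℕ):ℤ) + ((t.castSucc:ℕ):ℤ))
        congr 1
        simp only [Fin.coe_castSucc, Fin.val_succ]
        push_cast
        ring
      · intro t
        show c'.1 (L + ((i.castSucc:ℕ):ℤ) + ((t.succ:ℕ):ℤ))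
            = c'.1 (L + ((i.succ:ℕ):ℤ) + ((t.castSucc:ℕ):ℤ))
        congr 1
        simp only [Fin.coe_castSucc, Fin.val_succ]
        push_cast
        ring
      · have e1 : Fin.snoc (p i.castSucc).1 ((p i.succ).1 (Fin.last m))
            = fun t : Fin (m+2) => c.1 ((L + ((i:ℕ):ℤ)) + (t:ℤ)) := by
          funext t
          induction t using Fin.lastCases with
          | last =>
            rw [Fin.snoc_last]
            show c.1 (L + ((i.succ:ℕ):ℤ) + (((Fin.last m : Fin (m+1)):ℕ):ℤ)) = c.1 _
            congr 1
            simp only [Fin.val_succ, Fin.val_last]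
            push_cast
            ring
          | cast u =>
            rw [Fin.snoc_castSucc]
            show c.1 (L + ((i.castSucc:ℕ):ℤ) + ((u:ℕ):ℤ)) = c.1 _
            congr 1 <;> simp only [Fin.coe_castSucc]
        have e2 : Fin.snoc (p i.castSucc).2 ((p i.succ).2 (Fin.last m))
            = fun t : Fin (m+2) => c'.1 ((L + ((i:ℕ):ℤ)) + (t:ℤ)) := by
          funext t
          induction t using Fin.lastCases with
          | last =>
            rw [Fin.snoc_last]
            show c'.1 (L + ((i.succ:ℕ):ℤ) + (((Fin.last m : Fin (m+1)):ℕ):ℤ)) = c'.1 _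
            congr 1
            simp only [Fin.val_succ, Fin.val_last]
            push_cast
            ring
          | cast u =>
            rw [Fin.snoc_castSucc]
            show c'.1 (L + ((i.castSucc:ℕ):ℤ) + ((u:ℕ):ℤ)) = c'.1 _
            congr 1 <;> simp only [Fin.coe_castSucc]
        rw [e1, e2]
        exact hfac (L + ((i:ℕ):ℤ)) (by simp only [hI, Finset.mem_Icc]; omega)
    have hdiag := hcyc k p (by omega) h0p hlp hedges
    exact absurd (Subtype.ext (funext fun j => by
      by_cases hjab : a ≤ j ∧ j ≤ b
      · have hs : (j - L).toNat < k + 1 := by omega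
        have h1 := congrFun (congrFun hdiag ⟨(j-L).toNat, hs⟩) (0 : Fin (m+1))
        have hjL : L + (((⟨(j-L).toNat, hs⟩ : Fin (k+1)):ℕ):ℤ) + (((0 : Fin (m+1)):ℕ):ℤ) = j := by
          simp only [Fin.val_mk, Fin.val_zero]
          omega
        calc c.1 j = (p ⟨(j-L).toNat, hs⟩).1 0 := by
              show c.1 j = c.1 (L + (((⟨(j-L).toNat, hs⟩ : Fin (k+1)):ℕ):ℤ) + (((0 : Fin (m+1)):ℕ):ℤ))
              rw [hjL]
          _ = (p ⟨(j-L).toNat, hs⟩).2 0 := h1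
          _ = c'.1 j := by
              show c'.1 (L + (((⟨(j-L).toNat, hs⟩ : Fin (k+1)):ℕ):ℤ) + (((0 : Fin (m+1)):ℕ):ℤ)) = c'.1 j
              rw [hjL]
      · have h2 := hout j (by omega)
        rw [h2.1, h2.2])) hne
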